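/- (Lemma 1, fermionic TRS for Grover determinants) Let U be an n×n unitary matrix. For i = 1,…,r, let G_i^↑ be invertible n×n complex matrices with I - G_i^↑ invertible, and set G_i^↓ = U† (I - G_i^↑)† U. Assume all the matrices appearing are invertible as needed. Define for σ ∈ {↑,↓} the Grover determinant det g_r^σ = det[ ∏_{i=r}^{1} G_i^σ · ( I + ∏_{i=r}^{1} ((G_i^σ)^{-1} - I) ) ]. Then det g_r^↓ = conj(det g_r^↑). -/

import Mathlib

open Matrix

/-- Product of matrices in decreasing index order: `G (r-1) * ⋯ * G 0`. -/
noncomputable def prodDesc {n : Type*} [Fintype n] [DecidableEq n] {r : ℕ}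
    (G : Fin r → Matrix n n ℂ) : Matrix n n ℂ :=
  ((List.finRange r).reverse.map G).prod

/-- Grover determinant `det[∏ᵢ Gᵢ (I + ∏ᵢ (Gᵢ⁻¹ - I))]` (products in decreasing order). -/
noncomputable def groverDet {n : Type*} [Fintype n] [DecidableEq n] {r : ℕ}
    (G : Fin r → Matrix n n ℂ) : ℂ :=
  (prodDesc G * (1 + prodDesc (fun i => (G i)⁻¹ - 1))).det

private lemma listprod_conj {n : Type*} [Fintype n] [DecidableEq n]
    (U : Matrix n n ℂ) (hU : U * Uᴴ = 1) (hU' : Uᴴ * U = 1)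
    (l : List (Matrix n n ℂ)) :
    (l.map (fun A => Uᴴ * A * U)).prod = Uᴴ * l.prod * U := by
  induction l with
  | nil => simp [hU']
  | cons a t ih =>
    rw [List.map_cons, List.prod_cons, ih, List.prod_cons]
    calc Uᴴ * a * U * (Uᴴ * t.prod * U)
        = Uᴴ * a * ((U * Uᴴ) * (t.prod * U)) := by
          simp only [Matrix.mul_assoc]
      _ = Uᴴ * (a * t.prod) * U := by
          rw [hU]; simp only [Matrix.one_mul, Matrix.mul_assoc]

private lemma sandwich_mul {n : Type*} [Fintype n] [DecidableEq n]
    (U : Matrix n n ℂ) (hU : U * Uᴴ = 1) (A B : Matrix n n ℂ) :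
    (Uᴴ * A * U) * (Uᴴ * B * U) = Uᴴ * (A * B) * U := by
  calc Uᴴ * A * U * (Uᴴ * B * U)
      = Uᴴ * A * ((U * Uᴴ) * (B * U)) := by simp only [Matrix.mul_assoc]
    _ = Uᴴ * (A * B) * U := by rw [hU]; simp only [Matrix.one_mul, Matrix.mul_assoc]

private lemma det_list_prod' {n : Type*} [Fintype n] [DecidableEq n]
    (l : List (Matrix n n ℂ)) : l.prod.det = (l.map Matrix.det).prod := by
  induction l with
  | nil => simp
  | cons a t ih => simp [ih]

private lemma det_prodDesc {n : Type*} [Fintype n] [DecidableEq n] {r : ℕ}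
    (F : Fin r → Matrix n n ℂ) : (prodDesc F).det = ∏ i, (F i).det := by
  rw [prodDesc, det_list_prod', List.map_map, List.map_reverse, List.prod_reverse,
    ← Fin.prod_univ_def]
  rfl

/-- Lemma 1 (fermionic TRS for Grover determinants): if `Gᵢ↓ = U† (I - Gᵢ↑)† U` with `U`
unitary, then the spin-down Grover determinant is the complex conjugate of the spin-up
one. -/
theorem grover_det_conj {n : Type*} [Fintype n] [DecidableEq n]
    (r : ℕ) (U : Matrix n n ℂ) (hU : U * Uᴴ = 1)
    (Gup : Fin r → Matrix n n ℂ)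
    (hG : ∀ i, IsUnit (Gup i)) (hG' : ∀ i, IsUnit (1 - Gup i))
    (Gdn : Fin r → Matrix n n ℂ)
    (hGdn : ∀ i, Gdn i = Uᴴ * (1 - Gup i)ᴴ * U) :
    groverDet Gdn = (starRingEnd ℂ) (groverDet Gup) := by
  have hU' : Uᴴ * U = 1 := mul_eq_one_comm.mp hU
  have hGd : ∀ i, IsUnit (Gup i).det := fun i => (Matrix.isUnit_iff_isUnit_det _).mp (hG i)
  have hG'd : ∀ i, IsUnit (1 - Gup i).det := fun i => (Matrix.isUnit_iff_isUnit_det _).mp (hG' i)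
  set Q : Matrix n n ℂ := prodDesc (fun i => (Gup i)⁻¹ - 1) with hQ
  set P : Matrix n n ℂ := prodDesc Gup with hP
  set A : Matrix n n ℂ := ((List.finRange r).map (fun i => 1 - Gup i)).prod with hA
  -- factor algebra
  have hfeq : ∀ i, (Gup i)⁻¹ - 1 = (Gup i)⁻¹ * (1 - Gup i) := by
    intro i
    rw [Matrix.mul_sub, Matrix.mul_one, Matrix.nonsing_inv_mul _ (hGd i)]
  have hfmul : ∀ i, ((Gup i)⁻¹ - 1) * ((1 - Gup i)⁻¹ * Gup i) = 1 := by
    intro i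
    rw [hfeq i]
    calc (Gup i)⁻¹ * (1 - Gup i) * ((1 - Gup i)⁻¹ * Gup i)
        = (Gup i)⁻¹ * ((1 - Gup i) * (1 - Gup i)⁻¹) * Gup i := by
          simp only [Matrix.mul_assoc]
      _ = 1 := by
          rw [Matrix.mul_nonsing_inv _ (hG'd i), Matrix.mul_one,
            Matrix.nonsing_inv_mul _ (hGd i)]
  have hfinv : ∀ i, ((Gup i)⁻¹ - 1)⁻¹ = (1 - Gup i)⁻¹ * Gup i :=
    fun i => Matrix.inv_eq_right_inv (hfmul i)
  have hfunit : ∀ i, IsUnit ((Gup i)⁻¹ - 1) := by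
    intro i
    rw [Matrix.isUnit_iff_isUnit_det]
    exact IsUnit.of_mul_eq_one ((1 - Gup i)⁻¹ * Gup i).det
      (by rw [← Matrix.det_mul, hfmul i, Matrix.det_one])
  have h3 : ∀ i, (1 - Gup i)⁻¹ * Gup i = (1 - Gup i)⁻¹ - 1 := by
    intro i
    calc (1 - Gup i)⁻¹ * Gup i = (1 - Gup i)⁻¹ * (1 - (1 - Gup i)) := by
          rw [sub_sub_cancel]
      _ = (1 - Gup i)⁻¹ - 1 := by
          rw [Matrix.mul_sub, Matrix.mul_one, Matrix.nonsing_inv_mul _ (hG'd i)]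
  -- spin-down inverse formula
  have hGdninv : ∀ i, (Gdn i)⁻¹ - 1 = Uᴴ * ((((Gup i)⁻¹ - 1)⁻¹)ᴴ) * U := by
    intro i
    have h2 : (Gdn i)⁻¹ = Uᴴ * ((1 - Gup i)⁻¹)ᴴ * U := by
      apply Matrix.inv_eq_right_inv
      rw [hGdn i, sandwich_mul U hU, ← Matrix.conjTranspose_mul,
        Matrix.nonsing_inv_mul _ (hG'd i), Matrix.conjTranspose_one, Matrix.mul_one, hU']
    rw [h2, hfinv i, h3 i, Matrix.conjTranspose_sub, Matrix.conjTranspose_one,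
      Matrix.mul_sub, Matrix.sub_mul, Matrix.mul_one, hU']
  -- the two spin-down products
  have hPdn : prodDesc Gdn = Uᴴ * Aᴴ * U := by
    have hfun : Gdn = fun i => Uᴴ * (fun j => (1 - Gup j)ᴴ) i * U := funext hGdn
    rw [prodDesc, hfun, show (List.finRange r).reverse.map
        (fun i => Uᴴ * (fun j => (1 - Gup j)ᴴ) i * U)
        = ((List.finRange r).reverse.map (fun j => (1 - Gup j)ᴴ)).map
          (fun A => Uᴴ * A * U) by rw [List.map_map]; rfl,
      listprod_conj U hU hU', hA, Matrix.conjTranspose_list_prod, List.map_map,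
      ← List.map_reverse]
    rfl
  have hQinv : Q⁻¹ = ((List.finRange r).map (fun i => ((Gup i)⁻¹ - 1)⁻¹)).prod := by
    rw [hQ, prodDesc, Matrix.list_prod_inv_reverse, ← List.map_reverse,
      List.reverse_reverse, List.map_map]
    rfl
  have hQdn : prodDesc (fun i => (Gdn i)⁻¹ - 1) = Uᴴ * (Q⁻¹)ᴴ * U := by
    have hfun : (fun i => (Gdn i)⁻¹ - 1)
        = fun i => Uᴴ * (fun j => (((Gup j)⁻¹ - 1)⁻¹)ᴴ) i * U := funext hGdninv
    rw [prodDesc, hfun, show (List.finRange r).reverse.map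
        (fun i => Uᴴ * (fun j => (((Gup j)⁻¹ - 1)⁻¹)ᴴ) i * U)
        = ((List.finRange r).reverse.map (fun j => (((Gup j)⁻¹ - 1)⁻¹)ᴴ)).map
          (fun A => Uᴴ * A * U) by rw [List.map_map]; rfl,
      listprod_conj U hU hU', hQinv, Matrix.conjTranspose_list_prod, List.map_map,
      ← List.map_reverse]
    rfl
  -- determinant through unitary conjugation
  have hdetU : U.det * Uᴴ.det = 1 := by rw [← Matrix.det_mul, hU, Matrix.det_one]
  have hdet3 : ∀ X : Matrix n n ℂ, (Uᴴ * X * U).det = X.det := by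
    intro X
    rw [Matrix.det_mul, Matrix.det_mul]
    linear_combination X.det * hdetU
  -- spin-down det equals conjugate of an auxiliary det
  have key : groverDet Gdn = star (((1 + Q⁻¹) * A).det) := by
    rw [groverDet, hPdn, hQdn,
      show (1 : Matrix n n ℂ) + Uᴴ * (Q⁻¹)ᴴ * U = Uᴴ * (1 + (Q⁻¹)ᴴ) * U by
        rw [Matrix.mul_add, Matrix.add_mul, Matrix.mul_one, hU'],
      sandwich_mul U hU, hdet3,
      show Aᴴ * (1 + (Q⁻¹)ᴴ) = ((1 + Q⁻¹) * A)ᴴ by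
        rw [Matrix.conjTranspose_mul, Matrix.conjTranspose_add, Matrix.conjTranspose_one],
      Matrix.det_conjTranspose]
  -- determinant identities
  have hdetP : P.det = ∏ i, (Gup i).det := det_prodDesc Gup
  have hdetQ : Q.det = ∏ i, ((Gup i)⁻¹ - 1).det := det_prodDesc _
  have hdetA : A.det = Q.det * P.det := by
    rw [hA, det_list_prod', List.map_map, ← Fin.prod_univ_def, hdetP, hdetQ,
      ← Finset.prod_mul_distrib]
    apply Finset.prod_congr rfl
    intro i _
    show (1 - Gup i).det = _
    rw [← Matrix.det_mul, Matrix.sub_mul, Matrix.one_mul,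
      Matrix.nonsing_inv_mul _ (hGd i)]
  have hQu : IsUnit Q := by
    rw [hQ, prodDesc]
    apply List.prod_isUnit
    intro m hm
    obtain ⟨i, -, rfl⟩ := List.mem_map.mp hm
    exact hfunit i
  have hQdet : IsUnit Q.det := (Matrix.isUnit_iff_isUnit_det _).mp hQu
  have h1Q : (1 + Q⁻¹) * A = Q⁻¹ * ((Q + 1) * A) := by
    rw [← Matrix.mul_assoc, Matrix.mul_add, Matrix.mul_one,
      Matrix.nonsing_inv_mul _ hQdet, add_comm]
  have hfinal : ((1 + Q⁻¹) * A).det = groverDet Gup := by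
    rw [h1Q, Matrix.det_mul, Matrix.det_mul, Matrix.det_nonsing_inv, Ring.inverse_eq_inv,
      hdetA, groverDet, ← hP, ← hQ, Matrix.det_mul, add_comm Q 1]
    have hne : Q.det ≠ 0 := hQdet.ne_zero
    field_simp
  rw [key, hfinal, starRingEnd_apply]
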